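/- Let A be an N×N rate matrix and suppose f : [0,T] × ℝ^N → ℝ^N satisfies: f is Lipschitz in its second argument, and for each i, the i-th component e_iᵀ f(t, z) depends on z only through z_i and the differences z_k − z_i for k with A_{ki} > 0, with monotonicity: if z ≤ z' componentwise and z_i = z'_i then e_iᵀ f(t,z) ≤ e_iᵀ f(t,z'). If u, v : [0,T] → ℝ^N solve u' = −(f(t,u) + Aᵀu), v' = −(f(t,v) + Aᵀv) with terminal conditions u(T) = φ ≤ ψ = v(T) componentwise, then u(t) ≤ v(t) componentwise for all t ∈ [0,T]. -/

import Mathlib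

open Matrix

theorem stmt_9 {N : ℕ} (T : ℝ) (hT : 0 < T)
    (A : Matrix (Fin N) (Fin N) ℝ)
    (hoff : ∀ i j, i ≠ j → 0 ≤ A i j) (hcol : ∀ j, ∑ i, A i j = 0)
    (f : ℝ → (Fin N → ℝ) → (Fin N → ℝ))
    (K : NNReal) (hfLip : ∀ t, LipschitzWith K (f t))
    -- the i-th component of f depends on z only through z_i and the
    -- differences z_k − z_i for those k with A_{ki} > 0
    (hfdep : ∀ t (i : Fin N) (z z' : Fin N → ℝ),
      z i = z' i → (∀ k, 0 < A k i → z k - z i = z' k - z' i) →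
      f t z i = f t z' i)
    -- quasimonotonicity
    (hfmono : ∀ t (i : Fin N) (z z' : Fin N → ℝ),
      z ≤ z' → z i = z' i → f t z i ≤ f t z' i)
    (φ ψ : Fin N → ℝ) (hφψ : φ ≤ ψ)
    (u v : ℝ → (Fin N → ℝ))
    (hu : ∀ t ∈ Set.Icc (0:ℝ) T, HasDerivAt u (-(f t (u t) + Aᵀ *ᵥ u t)) t)
    (hv : ∀ t ∈ Set.Icc (0:ℝ) T, HasDerivAt v (-(f t (v t) + Aᵀ *ᵥ v t)) t)
    (huT : u T = φ) (hvT : v T = ψ) :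
    ∀ t ∈ Set.Icc (0:ℝ) T, u t ≤ v t := by
  set L : ℝ := (K:ℝ) + 1 with hLdef
  have hKL : (K:ℝ) + 1 = L := rfl
  have key : ∀ ε : ℝ, 0 < ε → ∀ s ∈ Set.Icc (0:ℝ) T, ∀ i,
      u s i < v s i + ε * Real.exp (L * (T - s)) := by
    intro ε hε
    by_contra hcon
    push_neg at hcon
    obtain ⟨s₁, hs₁, i₁, hi₁⟩ := hcon
    set W : Fin N → ℝ → ℝ := fun i s => v s i - u s i + ε * Real.exp (L * (T - s))
      with hWdef
    -- continuity of each component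
    have hWc : ∀ i, ∀ s ∈ Set.Icc (0:ℝ) T, ContinuousAt (W i) s := by
      intro i s hs
      have h1 : ContinuousAt (fun s => u s i) s :=
        ((continuous_apply i).continuousAt).comp (hu s hs).continuousAt
      have h2 : ContinuousAt (fun s => v s i) s :=
        ((continuous_apply i).continuousAt).comp (hv s hs).continuousAt
      have h3 : Continuous (fun s : ℝ => ε * Real.exp (L * (T - s))) := by continuity
      exact (h2.sub h1).add h3.continuousAt
    set S : Set ℝ := ⋃ i, {s | s ∈ Set.Icc (0:ℝ) T ∧ W i s ≤ 0} with hSdef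
    have hSsub : S ⊆ Set.Icc (0:ℝ) T := by
      intro s hs
      simp only [hSdef, Set.mem_iUnion, Set.mem_setOf_eq] at hs
      exact hs.choose_spec.1
    have hSclosed : IsClosed S := by
      refine isClosed_iUnion_of_finite fun i => ?_
      have hcont : ContinuousOn (W i) (Set.Icc (0:ℝ) T) :=
        fun s hs => (hWc i s hs).continuousWithinAt
      have := hcont.preimage_isClosed_of_isClosed isClosed_Icc (isClosed_Iic (a := (0:ℝ)))
      convert this using 1
      rfl
    have hS1 : s₁ ∈ S := by
      simp only [hSdef, Set.mem_iUnion, Set.mem_setOf_eq]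
      exact ⟨i₁, hs₁, by simp only [hWdef]; linarith⟩
    have hbdd : BddAbove S := ⟨T, fun s hs => (hSsub hs).2⟩
    set t₀ : ℝ := sSup S with ht₀def
    have ht₀S : t₀ ∈ S := hSclosed.csSup_mem ⟨s₁, hS1⟩ hbdd
    have ht₀Icc : t₀ ∈ Set.Icc (0:ℝ) T := hSsub ht₀S
    obtain ⟨i, hiIcc, hile⟩ : ∃ i, t₀ ∈ Set.Icc (0:ℝ) T ∧ W i t₀ ≤ 0 := by
      simpa only [hSdef, Set.mem_iUnion, Set.mem_setOf_eq] using ht₀S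
    -- W k T > 0
    have hWT : ∀ k, 0 < W k T := by
      intro k
      have := hφψ k
      simp only [hWdef, huT, hvT, sub_self, mul_zero, Real.exp_zero, mul_one]
      linarith
    have ht₀T : t₀ < T := by
      rcases lt_or_eq_of_le ht₀Icc.2 with h | h
      · exact h
      · exact absurd hile (by rw [h]; exact not_le.mpr (hWT i))
    -- positivity strictly to the right of t₀
    have hpos : ∀ s, t₀ < s → s ≤ T → ∀ k, 0 < W k s := by
      intro s hs hsT k
      by_contra hle
      push_neg at hle
      have hsS : s ∈ S := by
        simp only [hSdef, Set.mem_iUnion, Set.mem_setOf_eq]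
        exact ⟨k, ⟨le_trans ht₀Icc.1 hs.le, hsT⟩, hle⟩
      exact absurd (le_csSup hbdd hsS) (not_le.mpr hs)
    -- W k t₀ ≥ 0 by right continuity
    have hW0 : ∀ k, 0 ≤ W k t₀ := by
      intro k
      have htend : Filter.Tendsto (W k) (nhdsWithin t₀ (Set.Ioi t₀)) (nhds (W k t₀)) :=
        (hWc k t₀ ht₀Icc).tendsto.mono_left nhdsWithin_le_nhds
      refine ge_of_tendsto htend ?_
      filter_upwards [Ioo_mem_nhdsGT ht₀T] with s hs
      exact (hpos s hs.1 hs.2.le k).le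
    have hWi0 : W i t₀ = 0 := le_antisymm hile (hW0 i)
    set c : ℝ := ε * Real.exp (L * (T - t₀)) with hcdef
    have hc : 0 < c := mul_pos hε (Real.exp_pos _)
    have hui : u t₀ i = v t₀ i + c := by
      have := hWi0; simp only [hWdef] at this; linarith
    have huk : ∀ k, u t₀ k ≤ v t₀ k + c := by
      intro k
      have := hW0 k; simp only [hWdef] at this; linarith
    -- estimate on f
    have hf1 : f t₀ (u t₀) i ≤ f t₀ (fun k => v t₀ k + c) i :=
      hfmono t₀ i _ _ (fun k => huk k) hui
    have hf2 : f t₀ (fun k => v t₀ k + c) i ≤ f t₀ (v t₀) i + (K:ℝ) * c := by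
      have hd : dist (f t₀ (fun k => v t₀ k + c)) (f t₀ (v t₀)) ≤ (K:ℝ) * c := by
        refine le_trans ((hfLip t₀).dist_le_mul _ _) ?_
        refine mul_le_mul_of_nonneg_left ?_ K.coe_nonneg
        refine (dist_pi_le_iff hc.le).mpr fun k => ?_
        simp [Real.dist_eq, abs_of_pos hc]
      have hcomp := le_trans (dist_le_pi_dist
        (f t₀ (fun k => v t₀ k + c)) (f t₀ (v t₀)) i) hd
      rw [Real.dist_eq] at hcomp
      linarith [le_abs_self (f t₀ (fun k => v t₀ k + c) i - f t₀ (v t₀) i)]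
    -- estimate on Aᵀ term
    have hA : (Aᵀ *ᵥ u t₀) i - (Aᵀ *ᵥ v t₀) i ≤ 0 := by
      have h1 : (Aᵀ *ᵥ u t₀) i - (Aᵀ *ᵥ v t₀) i
          = ∑ k, A k i * (u t₀ k - v t₀ k) := by
        simp [Matrix.mulVec, dotProduct, Matrix.transpose_apply,
          mul_sub, Finset.sum_sub_distrib]
      rw [h1]
      have h2 : ∑ k, A k i * (u t₀ k - v t₀ k) ≤ ∑ k, A k i * c := by
        refine Finset.sum_le_sum fun k _ => ?_
        rcases eq_or_ne k i with rfl | hne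
        · exact le_of_eq (by rw [hui]; ring)
        · exact mul_le_mul_of_nonneg_left (by linarith [huk k]) (hoff k i hne)
      have h3 : ∑ k, A k i * c = 0 := by
        rw [← Finset.sum_mul, hcol i, zero_mul]
      linarith
    -- the derivative of W i at t₀
    have hderu : HasDerivAt (fun s => u s i)
        ((-(f t₀ (u t₀) + Aᵀ *ᵥ u t₀)) i) t₀ :=
      hasDerivAt_pi.mp (hu t₀ ht₀Icc) i
    have hderv : HasDerivAt (fun s => v s i)
        ((-(f t₀ (v t₀) + Aᵀ *ᵥ v t₀)) i) t₀ :=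
      hasDerivAt_pi.mp (hv t₀ ht₀Icc) i
    have hinner : HasDerivAt (fun s : ℝ => L * (T - s)) (L * (-1)) t₀ :=
      ((hasDerivAt_id t₀).const_sub T).const_mul L
    have hexpd : HasDerivAt (fun s : ℝ => ε * Real.exp (L * (T - s)))
        (ε * (Real.exp (L * (T - t₀)) * (L * (-1)))) t₀ :=
      hinner.exp.const_mul ε
    have hWd : HasDerivAt (W i)
        (((-(f t₀ (v t₀) + Aᵀ *ᵥ v t₀)) i - (-(f t₀ (u t₀) + Aᵀ *ᵥ u t₀)) i)
          + ε * (Real.exp (L * (T - t₀)) * (L * (-1)))) t₀ :=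
      (hderv.sub hderu).add hexpd
    set d : ℝ := ((-(f t₀ (v t₀) + Aᵀ *ᵥ v t₀)) i - (-(f t₀ (u t₀) + Aᵀ *ᵥ u t₀)) i)
      + ε * (Real.exp (L * (T - t₀)) * (L * (-1))) with hddef
    have hdeq : d = (f t₀ (u t₀) i - f t₀ (v t₀) i)
        + ((Aᵀ *ᵥ u t₀) i - (Aᵀ *ᵥ v t₀) i) - L * c := by
      simp only [hddef, hcdef, Pi.add_apply, Pi.neg_apply]
      ring
    have hLc : L * c = (K:ℝ) * c + c := by rw [hLdef]; ring
    have hdneg : d < 0 := by rw [hdeq, hLc]; linarith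
    -- contradiction via the slope
    have hslope : Filter.Tendsto (slope (W i) t₀) (nhdsWithin t₀ (Set.Ioi t₀)) (nhds d) :=
      (hasDerivAt_iff_tendsto_slope.mp hWd).mono_left
        (nhdsWithin_mono t₀ fun s hs => (Set.mem_Ioi.mp hs).ne')
    have h1 := hslope.eventually_lt_const hdneg
    obtain ⟨s, hsl, hso⟩ :=
      (h1.and (Filter.eventually_of_mem (Ioo_mem_nhdsGT ht₀T) fun s hs => hs)).exists
    have hWs : 0 < W i s := hpos s hso.1 hso.2.le i
    rw [slope_def_field, hWi0, sub_zero] at hsl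
    exact absurd (div_pos hWs (by linarith [hso.1] : (0:ℝ) < s - t₀)) (not_lt.mpr hsl.le)
  -- let ε → 0
  intro t ht
  refine Pi.le_def.mpr fun i => ?_
  by_contra hlt
  push_neg at hlt
  set e : ℝ := Real.exp (L * (T - t)) with hedef
  have he : 0 < e := Real.exp_pos _
  have hδ : 0 < u t i - v t i := by linarith
  have hεpos : 0 < (u t i - v t i) / (2 * e) := by positivity
  have := key _ hεpos t ht i
  have heq : (u t i - v t i) / (2 * e) * e = (u t i - v t i) / 2 := by
    field_simp
  rw [heq] at this
  linarith
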